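/- (Chi-square lower bound on mutual information, Theorem 3 of the paper.) Let (X, Y) be random variables with joint law P_{XY} on 𝒳 × 𝒴, marginals P_X and P_Y, and let Q_{X'}, Q_{Y'} be probability measures on 𝒳, 𝒴 such that: P_{XY} is absolutely continuous with respect to Q_{X'} ⊗ Q_{Y'}; P_X and Q_{X'} are mutually absolutely continuous with finite χ²(P_X‖Q_{X'}) and χ²(Q_{X'}‖P_X); P_Y and Q_{Y'} are mutually absolutely continuous with finite χ²(P_Y‖Q_{Y'}) and χ²(Q_{Y'}‖P_Y); and all KL divergences involved are finite. Then for every bounded measurable function T : 𝒳 × 𝒴 → ℝ and every real α > 0: I(X; Y) ≥ E_{P_{XY}}[T(X, Y)] − E_{Q_{X'} ⊗ Q_{Y'}}[exp(T(X', Y'))]/α − log α + 1 − χ²_UP(P_X‖Q_{X'}) − χ²_UP(P_Y‖Q_{Y'}). -/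

import Mathlib

open MeasureTheory Real

/-- The Kullback–Leibler divergence `D(P‖Q) = ∫ log (dP/dQ) dP`. -/
noncomputable def klDiv {X : Type*} [MeasurableSpace X] (P Q : Measure X) : ℝ :=
  ∫ x, llr P Q x ∂P

/-- The chi-square divergence `χ²(P‖Q) = ∫ (dP/dQ)² dQ − 1`. -/
noncomputable def chiSqDiv {X : Type*} [MeasurableSpace X] (P Q : Measure X) : ℝ :=
  (∫ x, ((P.rnDeriv Q x).toReal) ^ 2 ∂Q) - 1

/-- The refined chi-square upper bound `χ²_UP(P‖Q)`, which satisfies `D(P‖Q) ≤ χ²_UP(P‖Q)`. -/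
noncomputable def chiSqUP {X : Type*} [MeasurableSpace X] (P Q : Measure X) : ℝ :=
  Real.log (1 + chiSqDiv P Q) -
    (3 / 2) * (chiSqDiv P Q) ^ 2 /
      ((1 + chiSqDiv Q P) * (1 + chiSqDiv P Q) ^ 2 - 1)

/-- The mutual information `I(X;Y) = D(P_{XY} ‖ P_X ⊗ P_Y)` of a joint law `μ` on a product
space, where `μ.fst` and `μ.snd` are the marginals. -/
noncomputable def mutualInfo {𝓧 𝓨 : Type*} [MeasurableSpace 𝓧] [MeasurableSpace 𝓨]
    (μ : Measure (𝓧 × 𝓨)) : ℝ :=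
  klDiv μ (μ.fst.prod μ.snd)

private noncomputable def Kfun (v : ℝ) : ℝ := (v + 1) * Real.log v - 2 * v + 2

private noncomputable def Hfun (v : ℝ) : ℝ :=
  2 * (v ^ 2 + 2 * v) * Real.log v - 5 * v ^ 2 + 4 * v + 1

private lemma hasDerivAt_Kfun {v : ℝ} (hv : 0 < v) :
    HasDerivAt Kfun (Real.log v + v⁻¹ - 1) v := by
  have h1 : HasDerivAt (fun v : ℝ => (v + 1) * Real.log v)
      (1 * Real.log v + (v + 1) * v⁻¹) v :=
    ((hasDerivAt_id v).add_const 1).mul (Real.hasDerivAt_log hv.ne')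
  have h2 : HasDerivAt (fun v : ℝ => 2 * v) 2 v := by simpa using (hasDerivAt_id v).const_mul 2
  have := (h1.sub h2).add_const 2
  refine this.congr_deriv ?_
  field_simp
  ring

private lemma hasDerivAt_Hfun {v : ℝ} (hv : 0 < v) :
    HasDerivAt Hfun (4 * Kfun v) v := by
  have h1 : HasDerivAt (fun v : ℝ => 2 * (v ^ 2 + 2 * v))
      (2 * (2 * v + 2)) v := by
    have : HasDerivAt (fun v : ℝ => v ^ 2 + 2 * v) (2 * v + 2) v := by
      exact ((hasDerivAt_pow 2 v).add ((hasDerivAt_id v).const_mul 2)).congr_deriv (by norm_num)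
    exact this.const_mul 2
  have h2 : HasDerivAt (fun v : ℝ => 2 * (v ^ 2 + 2 * v) * Real.log v)
      (2 * (2 * v + 2) * Real.log v + 2 * (v ^ 2 + 2 * v) * v⁻¹) v :=
    h1.mul (Real.hasDerivAt_log hv.ne')
  have h3 : HasDerivAt (fun v : ℝ => 5 * v ^ 2) (5 * (2 * v)) v :=
    (hasDerivAt_pow 2 v).const_mul 5 |>.congr_deriv (by ring)
  have h4 : HasDerivAt (fun v : ℝ => 4 * v) 4 v := by simpa using (hasDerivAt_id v).const_mul 4
  have := ((h2.sub h3).add h4).add_const 1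
  refine this.congr_deriv ?_
  unfold Kfun
  field_simp
  ring

private lemma Kfun_deriv_nonneg {v : ℝ} (hv : 0 < v) : 0 ≤ Real.log v + v⁻¹ - 1 := by
  have := Real.one_sub_inv_le_log_of_pos hv
  linarith

private lemma Kfun_mono : MonotoneOn Kfun (Set.Ioi (0 : ℝ)) := by
  apply monotoneOn_of_deriv_nonneg (convex_Ioi 0)
  · intro v hv
    exact ((hasDerivAt_Kfun hv).continuousAt).continuousWithinAt
  · intro v hv
    rw [interior_Ioi] at hv
    exact (hasDerivAt_Kfun hv).differentiableAt.differentiableWithinAt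
  · intro v hv
    rw [interior_Ioi] at hv
    rw [(hasDerivAt_Kfun hv).deriv]
    exact Kfun_deriv_nonneg hv

private lemma Kfun_one : Kfun 1 = 0 := by simp [Kfun]

private lemma Hfun_one : Hfun 1 = 0 := by simp [Hfun]; ring

private lemma Hfun_nonneg {v : ℝ} (hv : 0 < v) : 0 ≤ Hfun v := by
  rcases le_total 1 v with h1 | h1
  · -- monotone on Ici 1
    have hmono : MonotoneOn Hfun (Set.Ici (1 : ℝ)) := by
      apply monotoneOn_of_deriv_nonneg (convex_Ici 1)
      · intro x hx
        have hx0 : (0:ℝ) < x := lt_of_lt_of_le one_pos hx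
        exact ((hasDerivAt_Hfun hx0).continuousAt).continuousWithinAt
      · intro x hx
        rw [interior_Ici] at hx
        exact (hasDerivAt_Hfun (lt_trans one_pos hx)).differentiableAt.differentiableWithinAt
      · intro x hx
        rw [interior_Ici] at hx
        have hx0 : (0:ℝ) < x := lt_trans one_pos hx
        rw [(hasDerivAt_Hfun hx0).deriv]
        have : Kfun 1 ≤ Kfun x := Kfun_mono (Set.mem_Ioi.mpr one_pos)
          (Set.mem_Ioi.mpr hx0) hx.le
        rw [Kfun_one] at this
        linarith
    have := hmono (Set.mem_Ici.mpr le_rfl) (Set.mem_Ici.mpr h1) h1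
    rwa [Hfun_one] at this
  · -- antitone on Ioc 0 1
    have hanti : AntitoneOn Hfun (Set.Ioc (0:ℝ) 1) := by
      apply antitoneOn_of_deriv_nonpos (convex_Ioc 0 1)
      · intro x hx
        exact ((hasDerivAt_Hfun hx.1).continuousAt).continuousWithinAt
      · intro x hx
        rw [interior_Ioc] at hx
        exact (hasDerivAt_Hfun hx.1).differentiableAt.differentiableWithinAt
      · intro x hx
        rw [interior_Ioc] at hx
        rw [(hasDerivAt_Hfun hx.1).deriv]
        have : Kfun x ≤ Kfun 1 := Kfun_mono (Set.mem_Ioi.mpr hx.1)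
          (Set.mem_Ioi.mpr one_pos) hx.2.le
        rw [Kfun_one] at this
        linarith
    have := hanti (Set.mem_Ioc.mpr ⟨hv, h1⟩) (Set.mem_Ioc.mpr ⟨one_pos, le_rfl⟩) h1
    rwa [Hfun_one] at this

/-- The pointwise certificate: for all `v > 0` and any real `l`. -/
private lemma certificate {v : ℝ} (hv : 0 < v) (l : ℝ) :
    (1 - 3*l + 3*l^2) * (1 - v⁻¹) + 3*l*(v - 1) - (3/2)*l^2*(v^2 - 1) ≤ Real.log v := by
  have hH := Hfun_nonneg hv
  have hsq : 0 ≤ 3 * (v - 1)^2 * ((v + 2) * l - 1)^2 :=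
    mul_nonneg (mul_nonneg (by norm_num) (sq_nonneg _)) (sq_nonneg _)
  have hpos : 0 < 2 * v * (v + 2) := by positivity
  have key : Real.log v * (2 * v * (v + 2)) -
      ((1 - 3*l + 3*l^2) * (1 - v⁻¹) + 3*l*(v - 1) - (3/2)*l^2*(v^2 - 1)) * (2 * v * (v + 2))
      = Hfun v + 3 * (v - 1)^2 * ((v + 2) * l - 1)^2 := by
    unfold Hfun
    field_simp
    ring
  have h2 : ((1 - 3*l + 3*l^2) * (1 - v⁻¹) + 3*l*(v - 1) - (3/2)*l^2*(v^2 - 1))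
      * (2 * v * (v + 2)) ≤ Real.log v * (2 * v * (v + 2)) := by linarith
  exact le_of_mul_le_mul_right (by linarith [h2]) hpos


/-- Nonnegativity of the KL divergence integral. -/
lemma integral_llr_nonneg' {X : Type*} [MeasurableSpace X] {μ ν : Measure X}
    [IsProbabilityMeasure μ] [IsProbabilityMeasure ν] (hμν : μ ≪ ν)
    (h : Integrable (llr μ ν) μ) : 0 ≤ ∫ x, llr μ ν x ∂μ := by
  set f : X → ℝ := fun x => (μ.rnDeriv ν x).toReal with hf
  set g : X → ℝ := fun x => (f x)⁻¹ with hg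
  have hmeas : Measurable f := (Measure.measurable_rnDeriv μ ν).ennreal_toReal
  have hprod_le : ∀ x, f x * g x ≤ 1 := by
    intro x
    rcases eq_or_ne (f x) 0 with h0 | h0
    · simp [hg, h0]
    · simp [hg, mul_inv_cancel₀ h0]
  have hprod_nonneg : ∀ x, 0 ≤ f x * g x := fun x => by
    simp only [hg]
    exact mul_nonneg ENNReal.toReal_nonneg (by positivity)
  have hintg_ν : Integrable (fun x => f x * g x) ν := by
    refine Integrable.mono' (integrable_const 1) ?_ ?_
    · exact ((hmeas.mul (hmeas.inv)).aestronglyMeasurable)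
    · exact Filter.Eventually.of_forall fun x => by
        rw [Real.norm_eq_abs, abs_of_nonneg (hprod_nonneg x)]; exact hprod_le x
  have hintg : Integrable g μ := by
    have := (integrable_rnDeriv_smul_iff hμν (f := g)).mp ?_
    · exact this
    · simpa [smul_eq_mul] using hintg_ν
  have hgint_le : ∫ x, g x ∂μ ≤ 1 := by
    rw [← integral_rnDeriv_smul hμν (f := g)]
    calc ∫ x, (μ.rnDeriv ν x).toReal • g x ∂ν ≤ ∫ _, (1:ℝ) ∂ν := by
          refine integral_mono (by simpa [smul_eq_mul] using hintg_ν) (integrable_const 1) ?_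
          intro x; simpa [smul_eq_mul] using hprod_le x
      _ = 1 := by simp
  have hlogg : ∀ x, Real.log (g x) = - llr μ ν x := by
    intro x
    simp [hg, hf, llr, Real.log_inv]
  have hgpos : ∀ᵐ x ∂μ, 0 < g x := by
    filter_upwards [Measure.rnDeriv_pos hμν, hμν.ae_le (Measure.rnDeriv_lt_top μ ν)]
      with x h0 htop
    simp only [hg, hf]
    have : 0 < (μ.rnDeriv ν x).toReal := ENNReal.toReal_pos h0.ne' htop.ne
    positivity
  have hmono : ∫ x, Real.log (g x) ∂μ ≤ ∫ x, (g x - 1) ∂μ := by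
    refine integral_mono_ae ?_ (hintg.sub (integrable_const 1)) ?_
    · refine (integrable_congr ?_).mpr h.neg
      exact Filter.Eventually.of_forall fun x => (hlogg x)
    · filter_upwards [hgpos] with x hx
      linarith [Real.log_le_sub_one_of_pos hx]
  have h1 : ∫ x, Real.log (g x) ∂μ = - ∫ x, llr μ ν x ∂μ := by
    rw [← integral_neg]
    exact integral_congr_ae (Filter.Eventually.of_forall fun x => hlogg x)
  have h2 : ∫ x, (g x - 1) ∂μ = (∫ x, g x ∂μ) - 1 := by
    rw [integral_sub hintg (integrable_const 1)]; simp
  rw [h1, h2] at hmono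
  linarith


lemma rnDeriv_prod_ae {𝓧 𝓨 : Type*} [MeasurableSpace 𝓧] [MeasurableSpace 𝓨]
    (P1 Q1 : Measure 𝓧) (P2 Q2 : Measure 𝓨)
    [IsProbabilityMeasure P1] [IsProbabilityMeasure Q1]
    [IsProbabilityMeasure P2] [IsProbabilityMeasure Q2]
    (h1 : P1 ≪ Q1) (h2 : P2 ≪ Q2) :
    (fun z : 𝓧 × 𝓨 => P1.rnDeriv Q1 z.1 * P2.rnDeriv Q2 z.2)
      =ᵐ[Q1.prod Q2] (P1.prod P2).rnDeriv (Q1.prod Q2) := by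
  have hmeas : Measurable (fun z : 𝓧 × 𝓨 => P1.rnDeriv Q1 z.1 * P2.rnDeriv Q2 z.2) :=
    ((Measure.measurable_rnDeriv P1 Q1).comp measurable_fst).mul
      ((Measure.measurable_rnDeriv P2 Q2).comp measurable_snd)
  refine Measure.eq_rnDeriv (ν := Q1.prod Q2) hmeas (Measure.MutuallySingular.zero_left) ?_
  rw [zero_add]
  refine Measure.prod_eq fun st t hs ht => ?_
  rw [withDensity_apply _ (hs.prod ht), ← Measure.prod_restrict]
  rw [MeasureTheory.lintegral_prod_mul
    (Measure.measurable_rnDeriv P1 Q1).aemeasurable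
    (Measure.measurable_rnDeriv P2 Q2).aemeasurable]
  rw [Measure.setLIntegral_rnDeriv h1, Measure.setLIntegral_rnDeriv h2]

lemma klDiv_le_chiSqUP {X : Type*} [MeasurableSpace X] (P Q : Measure X)
    [IsProbabilityMeasure P] [IsProbabilityMeasure Q]
    (hPQ : P ≪ Q) (hQP : Q ≪ P)
    (h1 : Integrable (fun x => ((P.rnDeriv Q x).toReal) ^ 2) Q)
    (h2 : Integrable (fun x => ((Q.rnDeriv P x).toReal) ^ 2) P)
    (hkl : Integrable (llr P Q) P) :
    klDiv P Q ≤ chiSqUP P Q := by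
  set f : X → ℝ := fun x => (P.rnDeriv Q x).toReal with hfdef
  set w : X → ℝ := fun x => (Q.rnDeriv P x).toReal with hwdef
  set m : ℝ := ∫ x, (f x) ^ 2 ∂Q with hmdef
  set a : ℝ := chiSqDiv Q P with hadef
  -- basic integrabilities and moments
  have hfQ : Integrable f Q := Measure.integrable_toReal_rnDeriv
  have hwP : Integrable w P := Measure.integrable_toReal_rnDeriv
  have hintfQ : ∫ x, f x ∂Q = 1 := by
    rw [Measure.integral_toReal_rnDeriv hPQ]; simp
  have hintwP : ∫ x, w x ∂P = 1 := by
    rw [Measure.integral_toReal_rnDeriv hQP]; simp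
  have hintw2P : ∫ x, (w x) ^ 2 ∂P = 1 + a := by
    rw [hadef]; unfold chiSqDiv; ring
  have hm1 : 1 ≤ m := by
    have hmono : ∫ x, f x ∂Q ≤ ∫ x, ((f x)^2 + 1)/2 ∂Q := by
      refine integral_mono hfQ ((h1.add (integrable_const 1)).div_const 2) ?_
      intro x
      have := sq_nonneg (f x - 1)
      simp only [Pi.add_apply]
      nlinarith [this]
    have : ∫ x, ((f x)^2 + 1)/2 ∂Q = (m + 1)/2 := by
      rw [integral_div, integral_add h1 (integrable_const 1)]
      simp [hmdef, hfdef]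
    rw [hintfQ, this] at hmono
    linarith
  have hm0 : (0:ℝ) < m := by linarith
  have hfP : Integrable f P := by
    refine (integrable_rnDeriv_smul_iff hPQ (f := f)).mp ?_
    have : (fun x => (P.rnDeriv Q x).toReal • f x) = fun x => (f x)^2 := by
      funext x; simp [hfdef, smul_eq_mul, sq]
    rw [this]; exact h1
  have hintfP : ∫ x, f x ∂P = m := by
    rw [← integral_rnDeriv_smul hPQ (f := f)]
    rw [hmdef]
    congr 1
    funext x; simp [hfdef, smul_eq_mul, sq]
  -- a.e. facts
  have hfw : ∀ᵐ x ∂P, f x * w x = 1 := by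
    have hmul : P.rnDeriv Q * Q.rnDeriv P =ᵐ[P] P.rnDeriv P :=
      Measure.rnDeriv_mul_rnDeriv hPQ
    filter_upwards [hmul, Measure.rnDeriv_self P] with x hx hx1
    have : ((P.rnDeriv Q * Q.rnDeriv P) x).toReal = (P.rnDeriv P x).toReal := by rw [hx]
    rw [Pi.mul_apply, ENNReal.toReal_mul] at this
    rw [this, hx1]; simp
  have hwpos : ∀ᵐ x ∂P, 0 < w x := by
    filter_upwards [Measure.rnDeriv_pos' hPQ, Measure.rnDeriv_lt_top Q P] with x h0 htop
    exact ENNReal.toReal_pos h0.ne' htop.ne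
  -- the key pointwise bound, a.e.
  set s : ℝ := (1 + a) * m ^ 2 with hsdef
  set l : ℝ := (m - 1) / (s - 1) with hldef
  set G : X → ℝ := fun x =>
    Real.log m - ((1 - 3*l + 3*l^2) * (1 - f x / m) + 3*l*(m * w x - 1)
      - (3/2)*l^2*((m * w x)^2 - 1)) with hGdef
  have hae : ∀ᵐ x ∂P, llr P Q x ≤ G x := by
    filter_upwards [hfw, hwpos] with x hx hw
    have hv : 0 < m * w x := mul_pos hm0 hw
    have hvinv : (m * w x)⁻¹ = f x / m := by
      have h' : (m * w x) * (f x / m) = 1 := by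
        rw [show (m * w x) * (f x / m) = (f x * w x) * (m / m) by ring, hx,
          div_self hm0.ne', one_mul]
      exact inv_eq_of_mul_eq_one_right h'
    have hcert := certificate hv l
    rw [hvinv] at hcert
    have hlogv : Real.log (m * w x) = Real.log m + Real.log (w x) :=
      Real.log_mul hm0.ne' hw.ne'
    have hfx : f x = (w x)⁻¹ := by
      rw [eq_inv_of_mul_eq_one_left hx]
    have hllr : llr P Q x = - Real.log (w x) := by
      have h0 : llr P Q x = Real.log (f x) := rfl
      rw [h0, hfx, Real.log_inv]
    rw [hllr, hGdef]
    simp only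
    rw [hlogv] at hcert
    linarith
  have if1 : Integrable (fun x => (1 - 3*l + 3*l^2) * (1 - f x / m)) P :=
    ((integrable_const 1).sub (hfP.div_const m)).const_mul _
  have if2 : Integrable (fun x => 3*l*(m * w x - 1)) P :=
    ((hwP.const_mul m).sub (integrable_const 1)).const_mul _
  have ifw2 : Integrable (fun x => (m * w x)^2) P := by
    have h' := h2.const_mul (m^2)
    refine h'.congr (Filter.Eventually.of_forall fun x => ?_)
    simp only [hwdef]
    ring
  have if3 : Integrable (fun x => (3/2)*l^2*((m * w x)^2 - 1)) P :=
    (ifw2.sub (integrable_const 1)).const_mul _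
  have hGint : Integrable G P := by
    rw [hGdef]
    exact (integrable_const _).sub ((if1.add if2).sub if3)
  have hint_le : klDiv P Q ≤ ∫ x, G x ∂P := integral_mono_ae hkl hGint hae
  -- compute ∫ G
  have e1 : ∫ x, (1 - f x / m) ∂P = 0 := by
    rw [integral_sub (integrable_const 1) (hfP.div_const m)]
    rw [integral_div, hintfP]
    simp [div_self hm0.ne']
  have e2 : ∫ x, (m * w x - 1) ∂P = m - 1 := by
    rw [integral_sub (hwP.const_mul m) (integrable_const 1)]
    rw [show (fun x => m * w x) = fun x => m * w x from rfl]
    rw [integral_const_mul, hintwP]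
    simp
  have e3 : ∫ x, ((m * w x)^2 - 1) ∂P = s - 1 := by
    rw [integral_sub ifw2 (integrable_const 1)]
    have : ∫ x, (m * w x)^2 ∂P = m^2 * (1 + a) := by
      rw [show (fun x => (m * w x)^2) = fun x => m^2 * (w x)^2 by funext x; ring]
      rw [integral_const_mul, hintw2P]
    rw [this]
    simp [hsdef]; ring
  have hGval : ∫ x, G x ∂P = Real.log m - 3*l*(m-1) + (3/2)*l^2*(s - 1) := by
    have hAB : Integrable (fun x => (1 - 3*l + 3*l^2) * (1 - f x / m)
        + 3*l*(m * w x - 1)) P := if1.add if2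
    have hABC : Integrable (fun x => (1 - 3*l + 3*l^2) * (1 - f x / m)
        + 3*l*(m * w x - 1) - (3/2)*l^2*((m * w x)^2 - 1)) P := hAB.sub if3
    rw [hGdef]
    rw [integral_sub (integrable_const _) hABC]
    rw [integral_sub hAB if3, integral_add if1 if2]
    rw [integral_const_mul, integral_const_mul, integral_const_mul]
    rw [e1, e2, e3]
    simp
    ring
  -- final algebra
  have hfinal : Real.log m - 3*l*(m-1) + (3/2)*l^2*(s - 1) = chiSqUP P Q := by
    have hb : chiSqDiv P Q = m - 1 := by unfold chiSqDiv; rw [← hmdef]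
    unfold chiSqUP
    rw [hb, ← hadef]
    have h1pb : 1 + (m - 1) = m := by ring
    rw [h1pb]
    have hden : (1 + a) * m ^ 2 - 1 = s - 1 := by rw [hsdef]
    rw [hden]
    rcases eq_or_ne (s - 1) 0 with hz | hz
    · rw [hldef, hz, div_zero, div_zero]
      ring
    · rw [hldef]
      field_simp
      ring
  linarith [hint_le, hGval.le, hfinal.le, hfinal.ge]


/-- **Chi-square lower bound on mutual information.** For a joint law `μ = P_{XY}` with
marginals `P_X`, `P_Y` and reference probability measures `Q_{X'}`, `Q_{Y'}` satisfying the
absolute-continuity and finiteness assumptions below, for every bounded measurable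
`T : 𝓧 × 𝓨 → ℝ` and every `α > 0`,
`I(X;Y) ≥ E_{P_{XY}}[T] − E_{Q_{X'} ⊗ Q_{Y'}}[exp T]/α − log α + 1 − χ²_UP(P_X‖Q_{X'})
  − χ²_UP(P_Y‖Q_{Y'})`. -/
theorem mutualInfo_ge_chiSq_bound {𝓧 𝓨 : Type*} [MeasurableSpace 𝓧] [MeasurableSpace 𝓨]
    (μ : Measure (𝓧 × 𝓨)) [IsProbabilityMeasure μ]
    (QX : Measure 𝓧) (QY : Measure 𝓨) [IsProbabilityMeasure QX] [IsProbabilityMeasure QY]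
    (hac : μ ≪ QX.prod QY)
    (hacX : μ.fst ≪ QX) (hacX' : QX ≪ μ.fst)
    (hacY : μ.snd ≪ QY) (hacY' : QY ≪ μ.snd)
    (hchiX : Integrable (fun x => ((μ.fst.rnDeriv QX x).toReal) ^ 2) QX)
    (hchiX' : Integrable (fun x => ((QX.rnDeriv μ.fst x).toReal) ^ 2) μ.fst)
    (hchiY : Integrable (fun y => ((μ.snd.rnDeriv QY y).toReal) ^ 2) QY)
    (hchiY' : Integrable (fun y => ((QY.rnDeriv μ.snd y).toReal) ^ 2) μ.snd)
    (hklJoint : Integrable (llr μ (QX.prod QY)) μ)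
    (hklMI : Integrable (llr μ (μ.fst.prod μ.snd)) μ)
    (hklX : Integrable (llr μ.fst QX) μ.fst)
    (hklY : Integrable (llr μ.snd QY) μ.snd)
    (T : 𝓧 × 𝓨 → ℝ) (hT : Measurable T) (C : ℝ) (hTbd : ∀ z, |T z| ≤ C)
    (α : ℝ) (hα : 0 < α) :
    mutualInfo μ ≥ (∫ z, T z ∂μ) - (∫ z, Real.exp (T z) ∂(QX.prod QY)) / α - Real.log α + 1
      - chiSqUP μ.fst QX - chiSqUP μ.snd QY := by
  set PP : Measure (𝓧 × 𝓨) := μ.fst.prod μ.snd with hPPdef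
  set QQ : Measure (𝓧 × 𝓨) := QX.prod QY with hQQdef
  have hPPQQ : PP ≪ QQ := hacX.prod hacY
  have hQQPP : QQ ≪ PP := hacX'.prod hacY'
  have hμPP : μ ≪ PP := hac.trans hQQPP
  -- a.e. multiplicative decomposition of densities
  have hmulJ : μ.rnDeriv PP * PP.rnDeriv QQ =ᵐ[μ] μ.rnDeriv QQ :=
    hac.ae_le (Measure.rnDeriv_mul_rnDeriv hμPP)
  have hprodμ : (fun z : 𝓧 × 𝓨 => μ.fst.rnDeriv QX z.1 * μ.snd.rnDeriv QY z.2)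
      =ᵐ[μ] PP.rnDeriv QQ :=
    hac.ae_le (rnDeriv_prod_ae μ.fst QX μ.snd QY hacX hacY)
  -- positivity and finiteness facts
  have hpos1 : ∀ᵐ z ∂μ, 0 < μ.rnDeriv PP z := Measure.rnDeriv_pos hμPP
  have hfin1 : ∀ᵐ z ∂μ, μ.rnDeriv PP z < ⊤ := hμPP.ae_le (Measure.rnDeriv_lt_top μ PP)
  have hposXμ : ∀ᵐ z ∂μ, 0 < μ.fst.rnDeriv QX z.1 :=
    ae_of_ae_map measurable_fst.aemeasurable (Measure.rnDeriv_pos hacX)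
  have hfinXμ : ∀ᵐ z ∂μ, μ.fst.rnDeriv QX z.1 < ⊤ :=
    ae_of_ae_map measurable_fst.aemeasurable (hacX.ae_le (Measure.rnDeriv_lt_top μ.fst QX))
  have hposYμ : ∀ᵐ z ∂μ, 0 < μ.snd.rnDeriv QY z.2 :=
    ae_of_ae_map measurable_snd.aemeasurable (Measure.rnDeriv_pos hacY)
  have hfinYμ : ∀ᵐ z ∂μ, μ.snd.rnDeriv QY z.2 < ⊤ :=
    ae_of_ae_map measurable_snd.aemeasurable (hacY.ae_le (Measure.rnDeriv_lt_top μ.snd QY))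
  -- log-likelihood ratio decomposition
  have hdecomp : ∀ᵐ z ∂μ, llr μ QQ z
      = llr μ PP z + (llr μ.fst QX z.1 + llr μ.snd QY z.2) := by
    filter_upwards [hmulJ, hprodμ, hpos1, hfin1, hposXμ, hfinXμ, hposYμ, hfinYμ]
      with z h1 h2 h3 h4 h5 h6 h7 h8
    have hQz : μ.rnDeriv QQ z = μ.rnDeriv PP z
        * (μ.fst.rnDeriv QX z.1 * μ.snd.rnDeriv QY z.2) := by
      rw [← h1, Pi.mul_apply, ← h2]
    have ha : ((μ.rnDeriv PP z).toReal) ≠ 0 := ENNReal.toReal_ne_zero.mpr ⟨h3.ne', h4.ne⟩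
    have hb : ((μ.fst.rnDeriv QX z.1).toReal) ≠ 0 := ENNReal.toReal_ne_zero.mpr ⟨h5.ne', h6.ne⟩
    have hc : ((μ.snd.rnDeriv QY z.2).toReal) ≠ 0 := ENNReal.toReal_ne_zero.mpr ⟨h7.ne', h8.ne⟩
    show Real.log (μ.rnDeriv QQ z).toReal = _
    rw [hQz, ENNReal.toReal_mul, ENNReal.toReal_mul,
      Real.log_mul ha (mul_ne_zero hb hc), Real.log_mul hb hc]
    rfl
  -- integrability of the marginal llr compositions
  have hintXz : Integrable (fun z : 𝓧 × 𝓨 => llr μ.fst QX z.1) μ :=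
    (integrable_map_measure (stronglyMeasurable_llr _ _).aestronglyMeasurable
      measurable_fst.aemeasurable).mp hklX
  have hintYz : Integrable (fun z : 𝓧 × 𝓨 => llr μ.snd QY z.2) μ :=
    (integrable_map_measure (stronglyMeasurable_llr _ _).aestronglyMeasurable
      measurable_snd.aemeasurable).mp hklY
  -- splitting the joint KL integral
  have hintsum : ∫ z, llr μ QQ z ∂μ
      = ∫ z, llr μ PP z ∂μ + ((∫ x, llr μ.fst QX x ∂μ.fst) + (∫ y, llr μ.snd QY y ∂μ.snd)) := by
    have hglue : Integrable (fun z : 𝓧 × 𝓨 => llr μ.fst QX z.1 + llr μ.snd QY z.2) μ :=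
      hintXz.add hintYz
    rw [integral_congr_ae hdecomp, integral_add hklMI hglue, integral_add hintXz hintYz]
    congr 1
    congr 1
    · exact (integral_map measurable_fst.aemeasurable
        (stronglyMeasurable_llr _ _).aestronglyMeasurable).symm
    · exact (integral_map measurable_snd.aemeasurable
        (stronglyMeasurable_llr _ _).aestronglyMeasurable).symm
  -- Donsker–Varadhan-type bound
  have hTint : Integrable T μ := by
    refine Integrable.mono' (integrable_const C) hT.aestronglyMeasurable ?_
    exact Filter.Eventually.of_forall fun z => by
      rw [Real.norm_eq_abs]; exact hTbd z
  have hexp : Integrable (fun z => Real.exp (T z)) QQ := by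
    refine Integrable.mono' (integrable_const (Real.exp C))
      (Real.measurable_exp.comp hT).aestronglyMeasurable ?_
    refine Filter.Eventually.of_forall fun z => ?_
    rw [Real.norm_eq_abs, abs_of_pos (Real.exp_pos _)]
    exact Real.exp_le_exp.mpr ((le_abs_self _).trans (hTbd z))
  haveI : IsProbabilityMeasure (QQ.tilted T) := isProbabilityMeasure_tilted hexp
  have h0 : 0 ≤ ∫ z, llr μ (QQ.tilted T) z ∂μ :=
    integral_llr_nonneg' (hac.trans (absolutelyContinuous_tilted hexp))
      (integrable_llr_tilted_right hac hTint hklJoint hexp)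
  rw [integral_llr_tilted_right hac hTint hexp hklJoint] at h0
  -- bound on the log term
  have hexppos : 0 < ∫ z, Real.exp (T z) ∂QQ := integral_exp_pos hexp
  have hlog : Real.log (∫ z, Real.exp (T z) ∂QQ)
      ≤ (∫ z, Real.exp (T z) ∂QQ) / α + Real.log α - 1 := by
    have h := Real.log_le_sub_one_of_pos (div_pos hexppos hα)
    rw [Real.log_div hexppos.ne' hα.ne'] at h
    linarith
  -- chi-square upper bounds on marginal KLs
  have hXbound : ∫ x, llr μ.fst QX x ∂μ.fst ≤ chiSqUP μ.fst QX :=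
    klDiv_le_chiSqUP μ.fst QX hacX hacX' hchiX hchiX' hklX
  have hYbound : ∫ y, llr μ.snd QY y ∂μ.snd ≤ chiSqUP μ.snd QY :=
    klDiv_le_chiSqUP μ.snd QY hacY hacY' hchiY hchiY' hklY
  -- conclusion
  have hmi : mutualInfo μ = ∫ z, llr μ PP z ∂μ := rfl
  rw [ge_iff_le, hmi]
  linarith
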